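/- Let I ⊆ ℝ be an interval and p ≥ 2. If M : I^p → I^p is a weakly contractive mean-type mapping (not necessarily continuous), then there exists at most one continuous mean K : I^p → I satisfying K ∘ M = K. -/
import Mathlib
open Set Filter Topology

noncomputable def vmax {p : ℕ} (v : Fin p → ℝ) : ℝ := ⨆ i, v i
noncomputable def vmin {p : ℕ} (v : Fin p → ℝ) : ℝ := ⨅ i, v i

section
variable {p : ℕ} [Nonempty (Fin p)]

lemma vmax_eq (v : Fin p → ℝ) : vmax v = Finset.univ.sup' Finset.univ_nonempty v :=
  (Finset.sup'_univ_eq_ciSup v).symm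

lemma vmin_eq (v : Fin p → ℝ) : vmin v = Finset.univ.inf' Finset.univ_nonempty v :=
  (Finset.inf'_univ_eq_ciInf v).symm

lemma le_vmax (v : Fin p → ℝ) (i : Fin p) : v i ≤ vmax v := by
  rw [vmax_eq]; exact Finset.le_sup' v (Finset.mem_univ i)

lemma vmin_le (v : Fin p → ℝ) (i : Fin p) : vmin v ≤ v i := by
  rw [vmin_eq]; exact Finset.inf'_le v (Finset.mem_univ i)

lemma vmax_le (v : Fin p → ℝ) {b : ℝ} (h : ∀ i, v i ≤ b) : vmax v ≤ b := by
  rw [vmax_eq]; exact Finset.sup'_le _ _ fun i _ => h i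

lemma le_vmin (v : Fin p → ℝ) {a : ℝ} (h : ∀ i, a ≤ v i) : a ≤ vmin v := by
  rw [vmin_eq]; exact Finset.le_inf' _ _ fun i _ => h i

lemma exists_vmax (v : Fin p → ℝ) : ∃ i, v i = vmax v := by
  rw [vmax_eq]
  obtain ⟨i, _, h⟩ := Finset.exists_mem_eq_sup' Finset.univ_nonempty v
  exact ⟨i, h.symm⟩

lemma exists_vmin (v : Fin p → ℝ) : ∃ i, v i = vmin v := by
  rw [vmin_eq]
  obtain ⟨i, _, h⟩ := Finset.exists_mem_eq_inf' Finset.univ_nonempty v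
  exact ⟨i, h.symm⟩

lemma cont_vmax : Continuous (vmax (p := p)) := by
  have : Continuous fun v : Fin p → ℝ => Finset.univ.sup' Finset.univ_nonempty (fun i => v i) :=
    Continuous.finset_sup'_apply _ fun i _ => continuous_apply i
  have h : vmax (p := p) = fun v => Finset.univ.sup' Finset.univ_nonempty (fun i => v i) :=
    funext fun v => vmax_eq v
  rw [h]; exact this

lemma cont_vmin : Continuous (vmin (p := p)) := by
  have : Continuous fun v : Fin p → ℝ => Finset.univ.inf' Finset.univ_nonempty (fun i => v i) :=
    Continuous.finset_inf'_apply _ fun i _ => continuous_apply i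
  have h : vmin (p := p) = fun v => Finset.univ.inf' Finset.univ_nonempty (fun i => v i) :=
    funext fun v => vmin_eq v
  rw [h]; exact this

end

/-- The "box" `I^p`. -/
def box (I : Set ℝ) (p : ℕ) : Set (Fin p → ℝ) := {v | ∀ i, v i ∈ I}

/-- `K` is a mean on `I^p`: internality. -/
def IsMeanOn (I : Set ℝ) (p : ℕ) (K : (Fin p → ℝ) → ℝ) : Prop :=
  ∀ v ∈ box I p, vmin v ≤ K v ∧ K v ≤ vmax v

/-- `M` is a mean-type mapping: each coordinate is a mean. -/
def MeanType (I : Set ℝ) (p : ℕ) (M : (Fin p → ℝ) → (Fin p → ℝ)) : Prop :=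
  ∀ v ∈ box I p, ∀ i, vmin v ≤ M v i ∧ M v i ≤ vmax v

def Nonconstant {p : ℕ} (v : Fin p → ℝ) : Prop := ¬ ∃ c, ∀ i, v i = c

def Contractive (I : Set ℝ) (p : ℕ) (M : (Fin p → ℝ) → (Fin p → ℝ)) : Prop :=
  ∀ v ∈ box I p, Nonconstant v → vmax (M v) - vmin (M v) < vmax v - vmin v

def WeaklyContractive (I : Set ℝ) (p : ℕ) (M : (Fin p → ℝ) → (Fin p → ℝ)) : Prop :=
  ∀ v ∈ box I p, Nonconstant v → ∃ n₀ : ℕ, ∀ n ≥ n₀,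
    vmax (M^[n] v) - vmin (M^[n] v) < vmax v - vmin v

/-- `T(a) = {v ∈ I^p : max v - min v ≤ a}`. -/
def Tset (I : Set ℝ) (p : ℕ) (a : ℝ) : Set (Fin p → ℝ) :=
  {v ∈ box I p | vmax v - vmin v ≤ a}

theorem stmt1 (I : Set ℝ) (hI : I.OrdConnected) (p : ℕ) (hp : 2 ≤ p)
    (M : (Fin p → ℝ) → (Fin p → ℝ)) (hMT : MeanType I p M)
    (hW : WeaklyContractive I p M)
    (K₁ K₂ : (Fin p → ℝ) → ℝ)
    (h₁m : IsMeanOn I p K₁) (h₁c : ContinuousOn K₁ (box I p))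
    (h₁i : ∀ v ∈ box I p, K₁ (M v) = K₁ v)
    (h₂m : IsMeanOn I p K₂) (h₂c : ContinuousOn K₂ (box I p))
    (h₂i : ∀ v ∈ box I p, K₂ (M v) = K₂ v) :
    ∀ v ∈ box I p, K₁ v = K₂ v := by
  have : Nonempty (Fin p) := ⟨⟨0, by omega⟩⟩
  intro v hv
  by_contra hne
  set a : ℝ := vmin v with ha'
  set b : ℝ := vmax v with hb'
  have ha : a ∈ I := by obtain ⟨i, hi⟩ := exists_vmin v; rw [ha', ← hi]; exact hv i
  have hb : b ∈ I := by obtain ⟨i, hi⟩ := exists_vmax v; rw [hb', ← hi]; exact hv i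
  have hIcc : Icc a b ⊆ I := hI.out ha hb
  set B : Set (Fin p → ℝ) := Icc (fun _ => a) (fun _ => b) with hB'
  have hBc : IsCompact B := isCompact_Icc
  have hBmem : ∀ w, w ∈ B ↔ ∀ i, w i ∈ Icc a b := by
    intro w
    constructor
    · rintro ⟨h1, h2⟩ i; exact ⟨h1 i, h2 i⟩
    · intro h; exact ⟨fun i => (h i).1, fun i => (h i).2⟩
  have hBbox : B ⊆ box I p := fun w hw i => hIcc ((hBmem w).1 hw i)
  -- M maps B to B
  have hMB : ∀ w ∈ B, M w ∈ B := by
    intro w hw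
    have hw' := (hBmem w).1 hw
    rw [hBmem]
    intro i
    have h1 := (hMT w (hBbox hw) i).1
    have h2 := (hMT w (hBbox hw) i).2
    have hmin : a ≤ vmin w := le_vmin w fun j => (hw' j).1
    have hmax : vmax w ≤ b := vmax_le w fun j => (hw' j).2
    exact ⟨hmin.trans h1, h2.trans hmax⟩
  set W : Set (Fin p → ℝ) := {w ∈ B | K₁ w = K₁ v ∧ K₂ w = K₂ v} with hW'
  have hvB : v ∈ B := (hBmem v).2 fun i => ⟨vmin_le v i, le_vmax v i⟩
  have hvW : v ∈ W := ⟨hvB, rfl, rfl⟩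
  have hWsub : W ⊆ B := fun w hw => hw.1
  have hWclosed : IsClosed W := by
    have e : W = (B ∩ K₁ ⁻¹' {K₁ v}) ∩ (B ∩ K₂ ⁻¹' {K₂ v}) := by
      ext w
      simp only [hW', mem_inter_iff, mem_preimage, mem_singleton_iff, mem_setOf_eq]
      tauto
    rw [e]
    exact ((h₁c.mono hBbox).preimage_isClosed_of_isClosed hBc.isClosed isClosed_singleton).inter
      ((h₂c.mono hBbox).preimage_isClosed_of_isClosed hBc.isClosed isClosed_singleton)
  have hWc : IsCompact W := hBc.of_isClosed_subset hWclosed hWsub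
  have hf : Continuous fun w : Fin p → ℝ => vmax w - vmin w := cont_vmax.sub cont_vmin
  obtain ⟨w₀, hw₀W, hmin₀⟩ := hWc.exists_isMinOn ⟨v, hvW⟩ hf.continuousOn
  have hw₀box : w₀ ∈ box I p := hBbox hw₀W.1
  have hgap : 0 < vmax w₀ - vmin w₀ := by
    have h1 := h₁m w₀ hw₀box
    have h2 := h₂m w₀ hw₀box
    rw [hw₀W.2.1] at h1
    rw [hw₀W.2.2] at h2
    by_contra hle
    push_neg at hle
    apply hne
    have : vmax w₀ ≤ vmin w₀ := by linarith
    have e1 : K₁ v = vmin w₀ := le_antisymm (h1.2.trans this) h1.1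
    have e2 : K₂ v = vmin w₀ := le_antisymm (h2.2.trans this) h2.1
    rw [e1, e2]
  have hnc : Nonconstant w₀ := by
    rintro ⟨c, hc⟩
    have h1 : vmax w₀ ≤ c := vmax_le w₀ fun i => (hc i).le
    have h2 : c ≤ vmin w₀ := le_vmin w₀ fun i => (hc i).ge
    linarith
  obtain ⟨n₀, hn₀⟩ := hW w₀ hw₀box hnc
  -- iterates stay in W
  have hiter : ∀ n, M^[n] w₀ ∈ W := by
    intro n
    induction n with
    | zero => simpa using hw₀W
    | succ n ih =>
      rw [Function.iterate_succ_apply']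
      have hbx := hBbox ih.1
      exact ⟨hMB _ ih.1, by rw [h₁i _ hbx, ih.2.1], by rw [h₂i _ hbx, ih.2.2]⟩
  have hlt := hn₀ n₀ le_rfl
  have hge := hmin₀ (hiter n₀)
  simp only [mem_setOf_eq] at hge
  linarith
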